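/- arXiv:1612.04694 — 2 statements merged into one kernel-verified Lean document; each statement's English description precedes it below -/
import Mathlib

section
/- Let d ≥ 1, let α be a real number with 0 < α ≤ 1, and let X_1, …, X_N be real symmetric d×d matrices each satisfying α·I ⪯ X_j ⪯ I. Define R_0 = I and R_j = I + (I − X_j) R_{j−1} for j = 1, …, N. Then λ_max((R_N)ᵀ R_N) ≤ (2−α)/α² + (1−α)^N. -/
open Matrix

variable {d : ℕ}

lemma inner_toEuclideanLin (M : Matrix (Fin d) (Fin d) ℝ) (x y : EuclideanSpace ℝ (Fin d)) :
    inner (𝕜 := ℝ) x (Matrix.toEuclideanLin M y)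
      = dotProduct (star ((WithLp.equiv 2 _) x)) (M *ᵥ ((WithLp.equiv 2 _) y)) := by
  simp [toEuclideanLin_apply, PiLp.inner_apply, dotProduct, mul_comm]

lemma psd_inner_nonneg {M : Matrix (Fin d) (Fin d) ℝ} (hM : M.PosSemidef)
    (x : EuclideanSpace ℝ (Fin d)) :
    0 ≤ inner (𝕜 := ℝ) x (Matrix.toEuclideanLin M x) := by
  rw [inner_toEuclideanLin]; exact hM.dotProduct_mulVec_nonneg _

open scoped MatrixOrder in
lemma norm_toEuclideanLin_le {A : Matrix (Fin d) (Fin d) ℝ} {β : ℝ} (hβ : 0 ≤ β)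
    (hA : A.PosSemidef) (hβA : (β • (1 : Matrix (Fin d) (Fin d) ℝ) - A).PosSemidef)
    (x : EuclideanSpace ℝ (Fin d)) :
    ‖Matrix.toEuclideanLin A x‖ ≤ β * ‖x‖ := by
  set L := Matrix.toEuclideanLin (𝕜 := ℝ) (m := Fin d) (n := Fin d)
  have hadj : ∀ (M : Matrix (Fin d) (Fin d) ℝ), M.IsHermitian →
      ∀ y z : EuclideanSpace ℝ (Fin d), inner (𝕜 := ℝ) (L M y) z = inner (𝕜 := ℝ) y (L M z) := by
    intro M hM y z
    have h1 : L Mᴴ = LinearMap.adjoint (L M) := Matrix.toEuclideanLin_conjTranspose_eq_adjoint M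
    have := LinearMap.adjoint_inner_right (L M) z y
    rw [← h1, hM.eq] at this
    rw [real_inner_comm, this, real_inner_comm]
  -- A² ≤ βA pointwise in quadratic form
  have hsq : (β • A - A * A).PosSemidef := by
    obtain ⟨s, hs_psd, hs_herm, hs_mul⟩ :
        ∃ s : Matrix (Fin d) (Fin d) ℝ, s.PosSemidef ∧ s.IsHermitian ∧ s * s = A :=
      ⟨CFC.sqrt A, (CFC.sqrt_nonneg A).posSemidef, (CFC.sqrt_nonneg A).posSemidef.1,
        CFC.sqrt_mul_sqrt_self A hA.nonneg⟩
    have key : sᴴ * (β • (1 : Matrix (Fin d) (Fin d) ℝ) - A) * s = β • A - A * A := by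
      rw [hs_herm.eq]
      rw [mul_sub, sub_mul, Matrix.mul_smul, mul_one, Matrix.smul_mul, hs_mul]
      congr 1
      rw [← hs_mul]
      noncomm_ring
    rw [← key]
    exact hβA.conjTranspose_mul_mul_same s
  have h1 : inner (𝕜 := ℝ) (L A x) (L A x) ≤ β * inner (𝕜 := ℝ) x (L A x) := by
    have h0 := psd_inner_nonneg hsq x
    have : L (β • A - A * A) x = β • L A x - L A (L A x) := by
      simp [L, map_sub, _root_.map_smul, toEuclideanLin_apply, mulVec_mulVec]
    rw [this] at h0
    rw [inner_sub_right, inner_smul_right] at h0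
    have := hadj A hA.1 x (L A x)
    linarith [this]
  have h2 : inner (𝕜 := ℝ) x (L A x) ≤ β * ‖x‖ ^ 2 := by
    have h0 := psd_inner_nonneg hβA x
    have : L (β • (1 : Matrix (Fin d) (Fin d) ℝ) - A) x = β • x - L A x := by
      simp [L, map_sub, _root_.map_smul, toEuclideanLin_apply, one_mulVec]
    rw [this, inner_sub_right, inner_smul_right, real_inner_self_eq_norm_sq] at h0
    linarith
  have h3 : ‖L A x‖ ^ 2 ≤ (β * ‖x‖) ^ 2 := by
    rw [← real_inner_self_eq_norm_sq]
    calc inner (𝕜 := ℝ) (L A x) (L A x) ≤ β * inner (𝕜 := ℝ) x (L A x) := h1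
    _ ≤ β * (β * ‖x‖ ^ 2) := by
        apply mul_le_mul_of_nonneg_left h2 hβ
    _ = (β * ‖x‖) ^ 2 := by ring
  exact le_of_sq_le_sq h3 (by positivity)


/-- The largest eigenvalue of a real symmetric `d × d` matrix `M`, expressed as the
supremum of the Rayleigh quotient `⟪x, M x⟫` over unit vectors `x`. -/
noncomputable def lambdaMax {d : ℕ} (M : Matrix (Fin d) (Fin d) ℝ) : ℝ :=
  ⨆ x : {x : EuclideanSpace ℝ (Fin d) // ‖x‖ = 1},
    inner (𝕜 := ℝ) x.1 (Matrix.toEuclideanLin M x.1)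

/-- Let `d ≥ 1`, `0 < α ≤ 1`, and let `X_1, …, X_N` be real symmetric
`d × d` matrices each satisfying `α • I ⪯ X_j ⪯ I` in the Loewner order.  Define `R_0 = I`
and `R_j = I + (I - X_j) R_{j-1}` for `j = 1, …, N`.  Then
`λ_max(R_Nᵀ R_N) ≤ (2-α)/α² + (1-α)^N`. -/
theorem lambdaMax_transpose_mul_self_estimator_le
    (d : ℕ) (hd : 1 ≤ d) (α : ℝ) (hα : 0 < α) (hα1 : α ≤ 1) (N : ℕ)
    (X : Fin N → Matrix (Fin d) (Fin d) ℝ)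
    (hsymm : ∀ j, (X j).IsSymm)
    (hlow : ∀ j, (X j - α • (1 : Matrix (Fin d) (Fin d) ℝ)).PosSemidef)
    (hup : ∀ j, ((1 : Matrix (Fin d) (Fin d) ℝ) - X j).PosSemidef)
    (R : ℕ → Matrix (Fin d) (Fin d) ℝ)
    (hR0 : R 0 = 1)
    (hRstep : ∀ j : Fin N, R (j + 1) = 1 + ((1 : Matrix (Fin d) (Fin d) ℝ) - X j) * R j) :
    lambdaMax ((R N)ᵀ * R N) ≤ (2 - α) / α ^ 2 + (1 - α) ^ N := by
  unfold lambdaMax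
  set L := Matrix.toEuclideanLin (𝕜 := ℝ) (m := Fin d) (n := Fin d)
  -- bound on ‖L (R j) x‖ by induction
  have hbound : ∀ j : ℕ, j ≤ N → ∀ x : EuclideanSpace ℝ (Fin d),
      ‖L (R j) x‖ ≤ (1 / α) * ‖x‖ := by
    intro j
    induction j with
    | zero =>
      intro _ x
      rw [hR0]
      have : L 1 x = x := by simp [L, toEuclideanLin_apply, one_mulVec]
      rw [this]
      have h1 : (1:ℝ) ≤ 1 / α := one_le_one_div hα hα1
      nlinarith [norm_nonneg x]
    | succ j ih =>
      intro hj x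
      have hjN : j < N := hj
      have hstep := hRstep ⟨j, hjN⟩
      simp only [Fin.val_mk] at hstep  -- hope ↑⟨j,_⟩ reduces
      rw [hstep]
      have hXj : ((1 : ℝ) - α) • (1 : Matrix (Fin d) (Fin d) ℝ)
          - ((1 : Matrix (Fin d) (Fin d) ℝ) - X ⟨j, hjN⟩) = X ⟨j, hjN⟩ - α • 1 := by
        rw [sub_smul, one_smul]; abel
      have hnorm : ∀ y, ‖L ((1 : Matrix (Fin d) (Fin d) ℝ) - X ⟨j, hjN⟩) y‖ ≤ (1 - α) * ‖y‖ := by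
        intro y
        exact norm_toEuclideanLin_le (by linarith) (hup _) (by rw [hXj]; exact hlow _) y
      have heval : L (1 + ((1 : Matrix (Fin d) (Fin d) ℝ) - X ⟨j, hjN⟩) * R j) x
          = x + L ((1 : Matrix (Fin d) (Fin d) ℝ) - X ⟨j, hjN⟩) (L (R j) x) := by
        simp [L, map_add, map_sub, LinearMap.add_apply, LinearMap.sub_apply, sub_mul,
          toEuclideanLin_apply, mulVec_mulVec, add_mulVec, one_mulVec, sub_mulVec, one_mul]
      rw [heval]
      calc ‖x + L ((1 : Matrix (Fin d) (Fin d) ℝ) - X ⟨j, hjN⟩) (L (R j) x)‖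
          ≤ ‖x‖ + ‖L ((1 : Matrix (Fin d) (Fin d) ℝ) - X ⟨j, hjN⟩) (L (R j) x)‖ := norm_add_le _ _
        _ ≤ ‖x‖ + (1 - α) * ‖L (R j) x‖ := by linarith [hnorm (L (R j) x)]
        _ ≤ ‖x‖ + (1 - α) * ((1 / α) * ‖x‖) := by
            have := ih (le_of_lt hjN) x
            nlinarith [norm_nonneg (L (R j) x)]
        _ = (1 / α) * ‖x‖ + (- (1/α) + 1 + (1-α) * (1/α)) * ‖x‖ := by ring
        _ = (1 / α) * ‖x‖ := by
            have : (- (1/α) + 1 + (1-α) * (1/α)) = 0 := by field_simp; ring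
            rw [this]; ring
  -- rayleigh quotient bound
  have hsub : Nonempty {x : EuclideanSpace ℝ (Fin d) // ‖x‖ = 1} :=
    ⟨⟨EuclideanSpace.single ⟨0, hd⟩ (1 : ℝ), by simp [EuclideanSpace.norm_single]⟩⟩
  apply ciSup_le
  rintro ⟨x, hx⟩
  have htrans : (R N)ᵀ = (R N)ᴴ := by
    ext i k; simp [conjTranspose_apply]
  have hq : inner (𝕜 := ℝ) x (L ((R N)ᵀ * R N) x) = ‖L (R N) x‖ ^ 2 := by
    have hmul : L ((R N)ᵀ * R N) x = L ((R N)ᵀ) (L (R N) x) := by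
      simp [L, toEuclideanLin_apply, mulVec_mulVec]
    rw [hmul, htrans, Matrix.toEuclideanLin_conjTranspose_eq_adjoint,
      LinearMap.adjoint_inner_right, real_inner_self_eq_norm_sq]
  simp only []
  rw [hq]
  have hb := hbound N le_rfl x
  rw [hx, mul_one] at hb
  have h1 : ‖L (R N) x‖ ^ 2 ≤ (1 / α) ^ 2 :=
    pow_le_pow_left₀ (norm_nonneg _) hb 2
  have h2 : (1 / α) ^ 2 ≤ (2 - α) / α ^ 2 + (1 - α) ^ N := by
    have hp : (0:ℝ) ≤ (1 - α) ^ N := pow_nonneg (by linarith) N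
    have : (1:ℝ) / α ^ 2 ≤ (2 - α) / α ^ 2 := by
      apply div_le_div_of_nonneg_right ?_ (by positivity)
      linarith
    calc (1 / α) ^ 2 = 1 / α ^ 2 := by ring
      _ ≤ (2 - α) / α ^ 2 := this
      _ ≤ _ := by linarith
  linarith
end

section
/- Let d ≥ 1, let H be a real d×d matrix, let N ≥ 1, and let (Ω, 𝔽, ℙ) be a probability space carrying independent Bochner-integrable random matrices X_1, …, X_N : Ω → ℝ^{d×d} with E[X_j] = H for every j. Define the random matrices R_0 = I and R_j = I + (I − X_j) R_{j−1} for j = 1, …, N. Then E[R_N] = Σ_{j=0}^{N} (I − H)^j. -/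
open Matrix MeasureTheory
open scoped Matrix.Norms.L2Operator

noncomputable def vnEntryCLM (d : ℕ) (i j : Fin d) :
    Matrix (Fin d) (Fin d) ℝ →L[ℝ] ℝ :=
  LinearMap.toContinuousLinearMap
    { toFun := fun A => A i j, map_add' := fun _ _ => rfl, map_smul' := fun _ _ => rfl }

lemma vnEntryCLM_apply (d : ℕ) (i j : Fin d) (A : Matrix (Fin d) (Fin d) ℝ) :
    vnEntryCLM d i j A = A i j := rfl

noncomputable def vnG (d N : ℕ) : ℕ → (Fin N → Matrix (Fin d) (Fin d) ℝ) → Matrix (Fin d) (Fin d) ℝ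
  | 0 => fun _ => 1
  | (k+1) => fun x => if h : k < N then 1 + (1 - x ⟨k, h⟩) * vnG d N k x else vnG d N k x

lemma vnG_congr (d N : ℕ) : ∀ (k : ℕ) (x y : Fin N → Matrix (Fin d) (Fin d) ℝ),
    (∀ i : Fin N, (i : ℕ) < k → x i = y i) → vnG d N k x = vnG d N k y
  | 0, _, _, _ => rfl
  | (k+1), x, y, h => by
    have ih := vnG_congr d N k x y (fun i hi => h i (Nat.lt_succ_of_lt hi))
    simp only [vnG]
    split_ifs with hk
    · rw [ih, h ⟨k, hk⟩ (Nat.lt_succ_self k)]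
    · exact ih

lemma vnG_measurable (d N : ℕ) (k : ℕ) :
    @Measurable (Fin N → Matrix (Fin d) (Fin d) ℝ) (Matrix (Fin d) (Fin d) ℝ)
      (MeasurableSpace.pi (m := fun _ => borel _)) (borel _) (vnG d N k) := by
  letI : MeasurableSpace (Matrix (Fin d) (Fin d) ℝ) := borel _
  haveI : BorelSpace (Matrix (Fin d) (Fin d) ℝ) := ⟨rfl⟩
  induction k with
  | zero => exact measurable_const
  | succ k ih =>
    simp only [vnG]
    split_ifs with hk
    · exact measurable_const.add ((measurable_const.sub (measurable_pi_apply _)).mul ih)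
    · exact ih

/-- expectation identity, Lemma 1 / eq. (8) of the paper.  Let `d ≥ 1`,
`H` a real `d × d` matrix, `N ≥ 1`, and let `X_1, …, X_N` be independent Bochner-integrable
random matrices on a probability space with `E[X_j] = H` for every `j`.  With `R_0 = I` and
`R_j = I + (I - X_j) R_{j-1}`, we have `E[R_N] = ∑_{j=0}^{N} (I - H)^j`. -/
theorem expectation_estimator_eq_vonNeumann_partial_sum
    (d : ℕ) (hd : 1 ≤ d) (H : Matrix (Fin d) (Fin d) ℝ) (N : ℕ) (hN : 1 ≤ N)
    (Ω : Type*) [MeasureSpace Ω] [IsProbabilityMeasure (volume : Measure Ω)]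
    (X : Fin N → Ω → Matrix (Fin d) (Fin d) ℝ)
    (hint : ∀ j, Integrable (X j))
    (hindep : ProbabilityTheory.iIndepFun
      (m := fun _ => borel (Matrix (Fin d) (Fin d) ℝ)) X volume)
    (hmean : ∀ j, (∫ ω, X j ω) = H)
    (R : ℕ → Ω → Matrix (Fin d) (Fin d) ℝ)
    (hR0 : ∀ ω, R 0 ω = 1)
    (hRstep : ∀ j : Fin N, ∀ ω,
      R (j.val + 1) ω = 1 + ((1 : Matrix (Fin d) (Fin d) ℝ) - X j ω) * R j.val ω) :
    (∫ ω, R N ω) = ∑ j ∈ Finset.range (N + 1), ((1 : Matrix (Fin d) (Fin d) ℝ) - H) ^ j := by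
  classical
  letI : MeasurableSpace (Matrix (Fin d) (Fin d) ℝ) := borel _
  haveI : BorelSpace (Matrix (Fin d) (Fin d) ℝ) := ⟨rfl⟩
  have hXsm : ∀ j, AEStronglyMeasurable (X j) volume := fun j => (hint j).1
  set Y : Fin N → Ω → Matrix (Fin d) (Fin d) ℝ := fun j => (hXsm j).mk (X j) with hYdef
  have hYmeas : ∀ j, Measurable (Y j) := fun j => (hXsm j).stronglyMeasurable_mk.measurable
  have hae : ∀ j, X j =ᵐ[volume] Y j := fun j => (hXsm j).ae_eq_mk
  have hYint : ∀ j, Integrable (Y j) := fun j => (hint j).congr (hae j)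
  have hYmean : ∀ j, (∫ ω, Y j ω) = H := fun j => by
    rw [← integral_congr_ae (hae j), hmean j]
  -- independence transfers to the measurable modifications
  have hpre : ∀ (j : Fin N) (s : Set (Matrix (Fin d) (Fin d) ℝ)),
      (X j ⁻¹' s : Set Ω) =ᵐ[volume] (Y j ⁻¹' s) := by
    intro j s
    filter_upwards [hae j] with ω hω
    show (X j ω ∈ s) = (Y j ω ∈ s)
    rw [hω]
  have hindepY : ProbabilityTheory.iIndepFun
      (m := fun _ => borel (Matrix (Fin d) (Fin d) ℝ)) Y volume := by
    rw [ProbabilityTheory.iIndepFun_iff_measure_inter_preimage_eq_mul] at hindep ⊢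
    intro S sets hsets
    have h1 : (⋂ i ∈ S, Y i ⁻¹' sets i : Set Ω) =ᵐ[volume] ⋂ i ∈ S, X i ⁻¹' sets i := by
      filter_upwards [MeasureTheory.ae_all_iff.2 hae] with ω hω
      show (ω ∈ ⋂ i ∈ S, Y i ⁻¹' sets i) = (ω ∈ ⋂ i ∈ S, X i ⁻¹' sets i)
      simp only [Set.mem_iInter, Set.mem_preimage, hω]
    calc volume (⋂ i ∈ S, Y i ⁻¹' sets i)
        = volume (⋂ i ∈ S, X i ⁻¹' sets i) := measure_congr h1
      _ = ∏ i ∈ S, volume (X i ⁻¹' sets i) := hindep S hsets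
      _ = ∏ i ∈ S, volume (Y i ⁻¹' sets i) :=
          Finset.prod_congr rfl fun i _ => measure_congr (hpre i _)
  -- the deterministic recursion applied to Y
  set G : ℕ → Ω → Matrix (Fin d) (Fin d) ℝ :=
    fun k ω => vnG d N k (fun i => Y i ω) with hGdef
  -- entry integrability helpers
  have entry_int : ∀ (f : Ω → Matrix (Fin d) (Fin d) ℝ), Integrable f →
      ∀ i j, Integrable (fun ω => f ω i j) := by
    intro f hf i j
    simpa [vnEntryCLM_apply] using (vnEntryCLM d i j).integrable_comp hf
  have int_of_entries : ∀ (f : Ω → Matrix (Fin d) (Fin d) ℝ),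
      (∀ i j, Integrable (fun ω => f ω i j)) → Integrable f := by
    intro f hf
    have : Integrable (fun ω => ∑ i : Fin d, ∑ j : Fin d,
        Matrix.single i j (f ω i j)) := by
      apply integrable_finset_sum
      intro i _
      apply integrable_finset_sum
      intro j _
      have := (hf i j).smul_const (Matrix.single i j (1:ℝ))
      simpa [Matrix.smul_single] using this
    refine this.congr (Filter.Eventually.of_forall fun ω => ?_)
    exact (Matrix.matrix_eq_sum_single (f ω)).symm
  have entry_integral : ∀ (f : Ω → Matrix (Fin d) (Fin d) ℝ), Integrable f →
      ∀ i j, (∫ ω, f ω) i j = ∫ ω, f ω i j := by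
    intro f hf i j
    have := (vnEntryCLM d i j).integral_comp_comm hf
    simpa [vnEntryCLM_apply] using this.symm
  -- independence of Y k from G k
  have hindepGk : ∀ (k : ℕ) (hk : k < N),
      ProbabilityTheory.IndepFun (Y ⟨k, hk⟩) (G k) volume := by
    intro k hk
    set T : Finset (Fin N) := Finset.univ.filter (fun i => (i : ℕ) < k) with hT
    have hdisj : Disjoint ({(⟨k, hk⟩ : Fin N)} : Finset (Fin N)) T := by
      simp only [Finset.disjoint_left, Finset.mem_singleton, hT, Finset.mem_filter]
      rintro i rfl ⟨-, h⟩
      exact lt_irrefl _ h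
    have h := hindepY.indepFun_finset {⟨k, hk⟩} T hdisj hYmeas
    set φ : ({ x // x ∈ ({⟨k, hk⟩} : Finset (Fin N)) } → Matrix (Fin d) (Fin d) ℝ) →
        Matrix (Fin d) (Fin d) ℝ := fun v => v ⟨_, Finset.mem_singleton_self _⟩ with hφ
    set ψ : ({ x // x ∈ T } → Matrix (Fin d) (Fin d) ℝ) →
        Matrix (Fin d) (Fin d) ℝ :=
      fun v => vnG d N k (fun i => if h : i ∈ T then v ⟨i, h⟩ else 1) with hψ
    have hφm : Measurable φ := measurable_pi_apply _
    have hψm : Measurable ψ := by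
      apply (vnG_measurable d N k).comp
      apply measurable_pi_lambda
      intro i
      by_cases h : i ∈ T
      · simpa only [dif_pos h] using measurable_pi_apply (⟨i, h⟩ : {x // x ∈ T})
      · simpa only [dif_neg h] using measurable_const
    have h2 := h.comp hφm hψm
    have e1 : (φ ∘ fun ω (i : ({⟨k, hk⟩} : Finset (Fin N))) => Y i ω) = Y ⟨k, hk⟩ := rfl
    have e2 : (ψ ∘ fun ω (i : (T : Finset (Fin N))) => Y i ω) = G k := by
      funext ω
      refine vnG_congr d N k _ _ fun i hi => ?_
      have hiT : i ∈ T := by simp [hT, hi]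
      simp only [Function.comp, dif_pos hiT]
    rw [e1, e2] at h2
    exact h2
  -- integrability of Y k * G k, given integrability of G k
  have prod_int : ∀ (k : ℕ) (hk : k < N), Integrable (G k) →
      Integrable (fun ω => Y ⟨k, hk⟩ ω * G k ω) := by
    intro k hk hGk
    apply int_of_entries
    intro i j
    have : (fun ω => (Y ⟨k, hk⟩ ω * G k ω) i j)
        = fun ω => ∑ l : Fin d, Y ⟨k, hk⟩ ω i l * G k ω l j := by
      funext ω; simp [Matrix.mul_apply]
    rw [this]
    apply integrable_finset_sum
    intro l _
    have hind : ProbabilityTheory.IndepFun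
        (fun ω => Y ⟨k, hk⟩ ω i l) (fun ω => G k ω l j) volume := by
      have := (hindepGk k hk).comp
        (vnEntryCLM d i l).continuous.measurable (vnEntryCLM d l j).continuous.measurable
      exact this
    exact hind.integrable_mul (entry_int _ (hYint _) i l) (entry_int _ hGk l j)
  -- main induction
  have main : ∀ k, k ≤ N → Integrable (G k) ∧
      (∫ ω, G k ω) = ∑ j ∈ Finset.range (k + 1),
        ((1 : Matrix (Fin d) (Fin d) ℝ) - H) ^ j := by
    intro k
    induction k with
    | zero =>
      intro _
      constructor
      · simpa [hGdef, vnG] using (integrable_const (1 : Matrix (Fin d) (Fin d) ℝ))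
      · simp [hGdef, vnG]
    | succ k ih =>
      intro hk1
      have hk : k < N := hk1
      obtain ⟨hGint, hGeq⟩ := ih (le_of_lt hk)
      have hGsucc : G (k+1) = fun ω => 1 + (G k ω - Y ⟨k, hk⟩ ω * G k ω) := by
        funext ω
        simp only [hGdef, vnG, dif_pos hk, one_sub_mul]
      have hprod := prod_int k hk hGint
      have hint1 : Integrable (G (k+1)) := by
        rw [hGsucc]
        exact (integrable_const _).add (hGint.sub hprod)
      refine ⟨hint1, ?_⟩
      have hintYG : (∫ ω, Y ⟨k, hk⟩ ω * G k ω) = H * ∫ ω, G k ω := by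
        ext i j
        rw [entry_integral _ hprod i j]
        have hsum : (fun ω => (Y ⟨k, hk⟩ ω * G k ω) i j)
            = fun ω => ∑ l : Fin d, Y ⟨k, hk⟩ ω i l * G k ω l j := by
          funext ω; simp [Matrix.mul_apply]
        rw [hsum, integral_finset_sum]
        · have : ∀ l : Fin d, (∫ ω, Y ⟨k, hk⟩ ω i l * G k ω l j)
              = H i l * (∫ ω, G k ω) l j := by
            intro l
            have hind : ProbabilityTheory.IndepFun
                (fun ω => Y ⟨k, hk⟩ ω i l) (fun ω => G k ω l j) volume := by
              have := (hindepGk k hk).comp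
                (vnEntryCLM d i l).continuous.measurable (vnEntryCLM d l j).continuous.measurable
              exact this
            have hmul := hind.integral_fun_mul_eq_mul_integral
              (entry_int _ (hYint _) i l).1 (entry_int _ hGint l j).1
            have e1 : (∫ ω, Y ⟨k, hk⟩ ω i l) = H i l := by
              rw [← entry_integral _ (hYint _) i l, hYmean]
            have e2 : (∫ ω, G k ω l j) = (∫ ω, G k ω) l j :=
              (entry_integral _ hGint l j).symm
            calc (∫ ω, Y ⟨k, hk⟩ ω i l * G k ω l j)
                = (∫ ω, Y ⟨k, hk⟩ ω i l) * (∫ ω, G k ω l j) := hmul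
              _ = H i l * (∫ ω, G k ω) l j := by rw [e1, e2]
          rw [Finset.sum_congr rfl fun l _ => this l]
          simp [Matrix.mul_apply]
        · intro l _
          have hind : ProbabilityTheory.IndepFun
              (fun ω => Y ⟨k, hk⟩ ω i l) (fun ω => G k ω l j) volume := by
            have := (hindepGk k hk).comp
              (vnEntryCLM d i l).continuous.measurable (vnEntryCLM d l j).continuous.measurable
            exact this
          exact hind.integrable_mul (entry_int _ (hYint _) i l) (entry_int _ hGint l j)
      have hsub : Integrable (fun ω => G k ω - Y ⟨k, hk⟩ ω * G k ω) := hGint.sub hprod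
      have hstep : (∫ ω, G (k+1) ω)
          = 1 + ((∫ ω, G k ω) - ∫ ω, Y ⟨k, hk⟩ ω * G k ω) := by
        calc (∫ ω, G (k+1) ω)
            = ∫ ω, (1 + (G k ω - Y ⟨k, hk⟩ ω * G k ω)) := by simp only [hGsucc]
          _ = (∫ _ω : Ω, (1 : Matrix (Fin d) (Fin d) ℝ))
              + ∫ ω, (G k ω - Y ⟨k, hk⟩ ω * G k ω) := by
                rw [integral_add (integrable_const _) hsub]
          _ = 1 + ((∫ ω, G k ω) - ∫ ω, Y ⟨k, hk⟩ ω * G k ω) := by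
                rw [integral_sub hGint hprod, integral_const]
                simp
      rw [hstep, hintYG, hGeq]
      conv_rhs => rw [geom_sum_succ]
      rw [one_sub_mul]
      abel
  -- transfer back to R
  have hRX : ∀ k, k ≤ N → ∀ ω, R k ω = vnG d N k (fun i => X i ω) := by
    intro k
    induction k with
    | zero => intro _ ω; simp [hR0 ω, vnG]
    | succ k ih =>
      intro hk1 ω
      have hk : k < N := hk1
      rw [hRstep ⟨k, hk⟩ ω, ih (le_of_lt hk) ω]
      simp only [vnG, dif_pos hk]
  have hRN : R N =ᵐ[volume] G N := by
    filter_upwards [MeasureTheory.ae_all_iff.2 hae] with ω hω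
    rw [hRX N le_rfl ω, hGdef]
    exact congrArg (vnG d N N) (funext fun i => hω i)
  rw [integral_congr_ae hRN]
  exact (main N le_rfl).2
end
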